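/- arXiv:math/0609165 — 6 statements merged into one kernel-verified Lean document; each statement's English description precedes it below -/
import Mathlib

section
/- Let 0 < σ ≤ 1 and 0 < λ < 1, and set ε := 1 - λ. If ε is sufficiently small, then ∑_{n=1}^∞ λ^n / n^σ ≤ 3 · ε^(-1/(1+σ)). -/
open Real Finset

theorem polylog_real_bound :
    ∃ ε₀ > (0 : ℝ), ∀ σ lam : ℝ, 0 < σ → σ ≤ 1 → 0 < lam → lam < 1 →
      1 - lam < ε₀ →
      ∑' n : ℕ, lam ^ (n + 1) / ((n : ℝ) + 1) ^ σ ≤ 3 * (1 - lam) ^ (-(1 / (1 + σ))) := by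
  refine ⟨1, one_pos, fun σ lam hσ hσ1 hlam0 hlam1 _ => ?_⟩
  set ε := 1 - lam with hεdef
  have hε0 : 0 < ε := by simp only [hεdef]; linarith
  set p : ℝ := 1/σ + 1 with hpdef
  set q : ℝ := 1 + σ with hqdef
  have hq1 : 1 < q := by simp only [hqdef]; linarith
  have hq0 : 0 < q := by linarith
  have hp1 : 1 < p := by
    have : 0 < 1/σ := by positivity
    simp only [hpdef]; linarith
  have hp0 : 0 < p := by linarith
  have hpq : p.HolderConjugate q := by
    refine Real.holderConjugate_iff.mpr ⟨hp1, ?_⟩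
    rw [hpdef, hqdef]
    field_simp
    ring
  set f : ℕ → ℝ := fun n => ((n : ℝ) + 1) ^ (-σ) with hfdef
  set g : ℕ → ℝ := fun n => lam ^ (n + 1) with hgdef
  have hnpos : ∀ n : ℕ, (0:ℝ) < (n:ℝ) + 1 := fun n => by positivity
  have hf0 : ∀ n, 0 ≤ f n := fun n => (rpow_pos_of_pos (hnpos n) _).le
  have hg0 : ∀ n, 0 ≤ g n := fun n => pow_nonneg hlam0.le _
  have hσp : -σ * p = -q := by rw [hpdef, hqdef]; field_simp
  have hfp : ∀ n, f n ^ p = ((n : ℝ) + 1) ^ (-q) := fun n => by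
    rw [hfdef, ← rpow_mul (hnpos n).le, hσp]
  set r : ℝ := lam ^ q with hrdef
  have hr0 : 0 ≤ r := (rpow_pos_of_pos hlam0 _).le
  have hr1 : r < 1 := rpow_lt_one hlam0.le hlam1 hq0
  have hrlam : r ≤ lam := by
    calc r = lam ^ q := rfl
    _ ≤ lam ^ (1:ℝ) := rpow_le_rpow_of_exponent_ge hlam0 hlam1.le hq1.le
    _ = lam := rpow_one lam
  have hgq : ∀ n, g n ^ q = r ^ (n + 1) := fun n => by
    show (lam ^ (n+1) : ℝ) ^ q = (lam ^ q) ^ (n+1)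
    rw [← rpow_natCast lam (n+1), ← rpow_mul hlam0.le,
      ← rpow_natCast (lam ^ q) (n+1), ← rpow_mul hlam0.le]
    congr 1
    ring
  -- p-series telescoping bound
  set G : ℕ → ℝ := fun n => if n = 0 then p else (1/σ) * (n:ℝ) ^ (-σ) with hGdef
  have hG0 : ∀ n, 0 ≤ G n := by
    intro n
    rw [hGdef]
    dsimp only
    split
    · exact hp0.le
    · have hn : (0:ℝ) < n := by
        rename_i h
        exact_mod_cast Nat.pos_of_ne_zero h
      positivity
  have hG0v : G 0 = p := by rw [hGdef]; norm_num
  have hGs : ∀ k : ℕ, G (k+1) = 1/σ * ((k:ℝ)+1)^(-σ) := by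
    intro k
    rw [hGdef]
    dsimp only
    rw [if_neg (Nat.succ_ne_zero k)]
    push_cast
    ring
  have htele : ∀ n : ℕ, ((n:ℝ) + 1) ^ (-q) ≤ G n - G (n + 1) := by
    intro n
    cases n with
    | zero =>
      show (((0:ℕ):ℝ) + 1) ^ (-q) ≤ G 0 - G (0+1)
      rw [hG0v, hGs 0]
      norm_num
      rw [hpdef, one_div]
      linarith
    | succ m =>
      show ((↑(m+1):ℝ) + 1) ^ (-q) ≤ G (m+1) - G (m+1+1)
      rw [hGs m, hGs (m+1)]
      push_cast
      set a : ℝ := (m:ℝ) + 1 with hadef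
      have ha1 : (1:ℝ) ≤ a := by rw [hadef]; linarith [Nat.cast_nonneg (α := ℝ) m]
      have ha0 : (0:ℝ) < a := by linarith
      have hb0 : (0:ℝ) < a + 1 := by linarith
      have hbern : (a/(a+1)) ^ σ ≤ 1 - σ/(a+1) := by
        have hs : (-1:ℝ) ≤ -(1/(a+1)) := by
          rw [neg_le_neg_iff, div_le_one hb0]
          linarith
        have hbb := rpow_one_add_le_one_add_mul_self hs hσ.le hσ1
        have heq : (1 : ℝ) + -(1/(a+1)) = a/(a+1) := by field_simp; ring
        rw [heq] at hbb
        calc (a/(a+1)) ^ σ ≤ 1 + σ * -(1/(a+1)) := hbb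
        _ = 1 - σ/(a+1) := by ring
      have h1 : a ^ (-σ) - (a+1) ^ (-σ) = a ^ (-σ) * (1 - (a/(a+1)) ^ σ) := by
        have hdiv : (a/(a+1))^σ = a^σ * ((a+1)^σ)⁻¹ := by
          rw [div_rpow ha0.le hb0.le, div_eq_mul_inv]
        have haa : a^(-σ) * a^σ = 1 := by
          rw [← rpow_add ha0]; simp
        rw [hdiv, mul_sub, mul_one, ← mul_assoc, haa, one_mul, rpow_neg hb0.le]
      have hkey : σ * (a+1) ^ (-q) ≤ a ^ (-σ) - (a+1) ^ (-σ) := by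
        have hsplit : (a+1) ^ (-q) = (a+1)^(-σ) * (a+1)⁻¹ := by
          rw [show -q = -σ + (-1) by rw [hqdef]; ring, rpow_add hb0, rpow_neg_one]
        have hmono : (a+1)^(-σ) ≤ a^(-σ) :=
          rpow_le_rpow_of_nonpos ha0 (by linarith) (by linarith)
        have h2 : σ/(a+1) ≤ 1 - (a/(a+1)) ^ σ := by linarith [hbern]
        calc σ * (a+1) ^ (-q) = (a+1)^(-σ) * (σ/(a+1)) := by
              rw [hsplit]; field_simp
        _ ≤ a^(-σ) * (σ/(a+1)) := by
              apply mul_le_mul_of_nonneg_right hmono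
              positivity
        _ ≤ a^(-σ) * (1 - (a/(a+1)) ^ σ) := by
              apply mul_le_mul_of_nonneg_left h2 (rpow_pos_of_pos ha0 _).le
        _ = a ^ (-σ) - (a+1) ^ (-σ) := h1.symm
      have h3 := mul_le_mul_of_nonneg_left hkey (by positivity : (0:ℝ) ≤ 1/σ)
      have h4 : 1/σ * (σ * (a+1)^(-q)) = (a+1)^(-q) := by field_simp
      rw [h4, mul_sub] at h3
      linarith
  have hfp_bound : ∀ n : ℕ, ∑ i ∈ range n, f i ^ p ≤ p := by
    intro n
    calc ∑ i ∈ range n, f i ^ p ≤ ∑ i ∈ range n, (G i - G (i+1)) := by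
          apply Finset.sum_le_sum
          intro i _
          rw [hfp]
          exact htele i
    _ = G 0 - G n := Finset.sum_range_sub' G n
    _ ≤ G 0 := by linarith [hG0 n]
    _ = p := hG0v
  have hfp_nonneg : ∀ n, 0 ≤ f n ^ p := fun n => rpow_nonneg (hf0 n) p
  have hfp_summable : Summable (fun n => f n ^ p) :=
    summable_of_sum_range_le hfp_nonneg hfp_bound
  have htsum_fp : ∑' n, f n ^ p ≤ p :=
    Real.tsum_le_of_sum_range_le hfp_nonneg hfp_bound
  -- geometric bound
  have hgeom_summable : Summable (fun n : ℕ => r ^ (n+1)) := by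
    simp_rw [pow_succ]
    exact (summable_geometric_of_lt_one hr0 hr1).mul_right r
  have hgq_summable : Summable (fun n => g n ^ q) := by
    simp_rw [hgq]
    exact hgeom_summable
  have htsum_gq : ∑' n, g n ^ q ≤ ε⁻¹ := by
    have e1 : ∑' n, g n ^ q = (∑' n : ℕ, r^n) * r := by
      rw [tsum_congr hgq]
      simp_rw [pow_succ]
      exact tsum_mul_right
    rw [e1, tsum_geometric_of_lt_one hr0 hr1]
    calc (1 - r)⁻¹ * r ≤ ε⁻¹ * 1 := by
          apply mul_le_mul _ hr1.le hr0 (by positivity)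
          apply inv_anti₀ hε0
          simp only [hεdef]
          linarith
    _ = ε⁻¹ := mul_one _
  -- Hölder
  have hholder :=
    inner_le_Lp_mul_Lq_tsum_of_nonneg hpq hf0 hg0 hfp_summable hgq_summable
  have hLHS : ∑' n : ℕ, lam ^ (n + 1) / ((n : ℝ) + 1) ^ σ = ∑' n, f n * g n := by
    apply tsum_congr
    intro n
    rw [hfdef, hgdef]
    dsimp only
    rw [rpow_neg (hnpos n).le, div_eq_mul_inv, mul_comm]
  -- bound (∑ f^p)^(1/p) ≤ 3
  have hA : (∑' n, f n ^ p) ^ (1/p) ≤ 3 := by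
    have hAA : (∑' n, f n ^ p) ^ (1/p) ≤ p ^ (1/p) := by
      apply rpow_le_rpow (tsum_nonneg hfp_nonneg) htsum_fp
      positivity
    have hp3 : p ≤ (3:ℝ) ^ p := by
      have h1 : p + 1 ≤ Real.exp p := Real.add_one_le_exp p
      have h2 : Real.exp p = (Real.exp 1) ^ p := by rw [← Real.exp_one_rpow p]
      have h3 : (Real.exp 1) ^ p ≤ (3:ℝ) ^ p := by
        apply rpow_le_rpow (Real.exp_pos 1).le _ hp0.le
        linarith [Real.exp_one_lt_d9]
      linarith
    have : p ^ (1/p) ≤ ((3:ℝ) ^ p) ^ (1/p) :=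
      rpow_le_rpow hp0.le hp3 (by positivity)
    rw [← rpow_mul (by norm_num : (0:ℝ) ≤ 3), mul_one_div, div_self hp0.ne', rpow_one] at this
    linarith
  -- bound (∑ g^q)^(1/q) ≤ ε ^ (-(1/(1+σ)))
  have hB : (∑' n, g n ^ q) ^ (1/q) ≤ ε ^ (-(1/q)) := by
    have h1 : (∑' n, g n ^ q) ^ (1/q) ≤ (ε⁻¹) ^ (1/q) := by
      apply rpow_le_rpow (tsum_nonneg fun n => rpow_nonneg (hg0 n) q) htsum_gq
      positivity
    have h2 : (ε⁻¹ : ℝ) ^ (1/q) = ε ^ (-(1/q)) := by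
      rw [← rpow_neg_one ε, ← rpow_mul hε0.le]
      congr 1
      ring
    rw [h2] at h1
    exact h1
  rw [hLHS]
  calc ∑' n, f n * g n ≤ (∑' n, f n ^ p) ^ (1/p) * (∑' n, g n ^ q) ^ (1/q) := hholder
  _ ≤ 3 * ε ^ (-(1/q)) := by
      apply mul_le_mul hA hB (rpow_nonneg (tsum_nonneg fun n => rpow_nonneg (hg0 n) q) _)
        (by norm_num)
end

section
/- Let s be a complex number with 0 < Re s ≤ 1. There is a constant C (one may take C = 2·e^(1/e) < 3) independent of s such that for all complex z with |z| < 1 and 1 - |z| sufficiently small, |∑_{n=1}^∞ z^n / n^s| ≤ C · (1 - |z|)^(-1/(1+Re s)). -/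
open Real Finset

lemma exp_two_fifths_lt : Real.exp (2/5) < 3/2 := by
  have h := Real.exp_bound (x := 2/5) (abs_le.mpr ⟨by norm_num, by norm_num⟩) (n := 3) (by norm_num)
  have hsum : ∑ m ∈ range 3, (2/5:ℝ) ^ m / m.factorial = 37/25 := by
    simp [Finset.sum_range_succ, Nat.factorial]
    norm_num
  rw [hsum, abs_of_nonneg (by norm_num : (0:ℝ) ≤ 2/5)] at h
  have h2 := (abs_le.1 h).2
  norm_num [Nat.factorial] at h2
  linarith

lemma C_lt_three : 2 * Real.exp 1 ^ (1 / Real.exp 1) < 3 := by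
  rw [Real.exp_one_rpow]
  have he : (5/2:ℝ) < Real.exp 1 := by
    have := Real.exp_one_gt_d9; linarith
  have h1 : (1:ℝ) / Real.exp 1 < 2/5 := by
    rw [div_lt_div_iff₀ (Real.exp_pos 1) (by norm_num)]; linarith
  have := (Real.exp_lt_exp.2 h1).trans exp_two_fifths_lt
  linarith

theorem polylog_bound :
    ∃ C ε₀ : ℝ, C = 2 * Real.exp 1 ^ (1 / Real.exp 1) ∧ C < 3 ∧ 0 < ε₀ ∧
      ∀ (s : ℂ) (z : ℂ), 0 < s.re → s.re ≤ 1 → ‖z‖ < 1 →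
        1 - ‖z‖ < ε₀ →
        ‖∑' n : ℕ, z ^ (n + 1) / ((n : ℂ) + 1) ^ s‖ ≤
          C * (1 - ‖z‖) ^ (-(1 / (1 + s.re))) := by
  refine ⟨_, 1, rfl, C_lt_three, one_pos, ?_⟩
  intro s z hs0 hs1 hz1 _
  set σ := s.re with hσ
  set r := ‖z‖ with hr
  have hr0 : 0 ≤ r := norm_nonneg z
  have hε0 : 0 < 1 - r := by linarith
  set ε := 1 - r with hεdef
  have hε1 : ε ≤ 1 := by simp [hεdef]; linarith
  have h1σ : (0:ℝ) < 1 + σ := by linarith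
  set p := 1 / (1 + σ) with hp
  have hp0 : 0 < p := by positivity
  set N := ε ^ (-p) with hN
  have hN0 : 0 < N := Real.rpow_pos_of_pos hε0 _
  have hN1 : 1 ≤ N := Real.one_le_rpow_of_pos_of_le_one_of_nonpos hε0 hε1 (by linarith)
  set m := ⌊N⌋₊ with hm
  have hmN : (m : ℝ) ≤ N := Nat.floor_le hN0.le
  have hNm1 : N ≤ (m : ℝ) + 1 := (Nat.lt_floor_add_one N).le
  -- the real term sequence
  set g : ℕ → ℝ := fun n => r ^ (n+1) / ((n : ℝ) + 1) ^ σ with hg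
  have hden1 : ∀ n : ℕ, (1:ℝ) ≤ ((n:ℝ)+1) ^ σ := by
    intro n
    exact Real.one_le_rpow (by exact_mod_cast Nat.succ_le_succ (Nat.zero_le n)) hs0.le
  have hden0 : ∀ n : ℕ, (0:ℝ) < ((n:ℝ)+1) ^ σ := fun n => lt_of_lt_of_le one_pos (hden1 n)
  have hg0 : ∀ n, 0 ≤ g n := fun n => div_nonneg (pow_nonneg hr0 _) (hden0 n).le
  have hg1 : ∀ n, g n ≤ 1 := by
    intro n
    rw [hg, div_le_one (hden0 n)]
    exact le_trans (pow_le_one₀ hr0 hz1.le) (hden1 n)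
  have habs : ∀ n : ℕ, ‖z ^ (n+1) / ((n:ℂ)+1) ^ s‖ = g n := by
    intro n
    rw [norm_div, norm_pow]
    congr 1
    have : ((n:ℂ)+1) = (((n:ℝ)+1 : ℝ) : ℂ) := by push_cast; ring
    rw [this, Complex.norm_cpow_eq_rpow_re_of_pos (by positivity)]
  have hgeo : Summable (fun n : ℕ => r ^ n) := summable_geometric_of_lt_one hr0 hz1
  have hsumg : Summable g := by
    refine Summable.of_nonneg_of_le hg0 (fun n => ?_) hgeo
    rw [hg, div_le_iff₀ (hden0 n)]
    calc r ^ (n+1) ≤ r ^ n := pow_le_pow_of_le_one hr0 hz1.le (by omega)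
    _ ≤ r ^ n * ((n:ℝ)+1) ^ σ := le_mul_of_one_le_right (pow_nonneg hr0 _) (hden1 n)
  -- reduce to real series
  have habs_sum : Summable (fun n : ℕ => ‖z ^ (n+1) / ((n:ℂ)+1) ^ s‖) := by
    simpa only [habs] using hsumg
  have h1 : ‖∑' n : ℕ, z ^ (n + 1) / ((n : ℂ) + 1) ^ s‖ ≤ ∑' n, g n := by
    have h := norm_tsum_le_tsum_norm (f := fun n : ℕ => z ^ (n+1) / ((n:ℂ)+1) ^ s)
      habs_sum
    rwa [tsum_congr habs] at h
  -- split the sum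
  have hsplit := Summable.sum_add_tsum_nat_add m hsumg
  -- head bound
  have hhead : ∑ i ∈ range m, g i ≤ (m : ℝ) := by
    calc ∑ i ∈ range m, g i ≤ ∑ i ∈ range m, 1 := Finset.sum_le_sum fun i _ => hg1 i
    _ = (m:ℝ) := by simp
  -- tail bound
  have hNσ0 : (0:ℝ) < N ^ σ := Real.rpow_pos_of_pos hN0 _
  have htail_le : ∀ i : ℕ, g (i + m) ≤ r ^ (i + m + 1) / N ^ σ := by
    intro i
    rw [hg]
    apply div_le_div_of_nonneg_left (pow_nonneg hr0 _) hNσ0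
    apply Real.rpow_le_rpow hN0.le _ hs0.le
    push_cast
    have hi : (0:ℝ) ≤ (i:ℝ) := Nat.cast_nonneg i
    linarith
  have htailb_sum : Summable (fun i : ℕ => r ^ (i + m + 1) / N ^ σ) := by
    have : (fun i : ℕ => r ^ (i + m + 1) / N ^ σ) =
        fun i : ℕ => (r ^ (m+1) / N ^ σ) * r ^ i := by
      funext i; rw [pow_add, pow_add]; ring
    rw [this]
    exact hgeo.mul_left _
  have htail : ∑' i : ℕ, g (i + m) ≤ N := by
    have h2 : ∑' i : ℕ, g (i + m) ≤ ∑' i : ℕ, r ^ (i + m + 1) / N ^ σ :=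
      Summable.tsum_le_tsum htail_le ((summable_nat_add_iff m).2 hsumg) htailb_sum
    have h3 : ∑' i : ℕ, r ^ (i + m + 1) / N ^ σ = (r ^ (m+1) / N ^ σ) * (1 - r)⁻¹ := by
      rw [← tsum_geometric_of_lt_one hr0 hz1, ← tsum_mul_left]
      congr 1; funext i; rw [pow_add, pow_add]; ring
    have h4 : (r ^ (m+1) / N ^ σ) * (1 - r)⁻¹ ≤ 1 / N ^ σ * ε⁻¹ := by
      rw [hεdef]
      gcongr
      exact pow_le_one₀ hr0 hz1.le
    have h5 : 1 / N ^ σ * ε⁻¹ = N := by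
      rw [hN, ← Real.rpow_mul hε0.le, one_div, ← Real.rpow_neg hε0.le,
        ← Real.rpow_neg_one ε, ← Real.rpow_add hε0]
      congr 1
      rw [hp]
      field_simp
      ring
    calc ∑' i : ℕ, g (i + m) ≤ ∑' i : ℕ, r ^ (i + m + 1) / N ^ σ := h2
    _ = (r ^ (m+1) / N ^ σ) * (1 - r)⁻¹ := h3
    _ ≤ 1 / N ^ σ * ε⁻¹ := h4
    _ = N := h5
  have hC2 : (2:ℝ) ≤ 2 * Real.exp 1 ^ (1 / Real.exp 1) := by
    have h1e : (1:ℝ) ≤ Real.exp 1 := by linarith [Real.exp_one_gt_d9]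
    have := Real.one_le_rpow h1e (by positivity : (0:ℝ) ≤ 1 / Real.exp 1)
    linarith
  calc ‖∑' n : ℕ, z ^ (n + 1) / ((n : ℂ) + 1) ^ s‖ ≤ ∑' n, g n := h1
  _ = ∑ i ∈ range m, g i + ∑' i, g (i + m) := hsplit.symm
  _ ≤ N + N := by linarith [hhead, htail, hmN]
  _ = 2 * N := by ring
  _ ≤ 2 * Real.exp 1 ^ (1 / Real.exp 1) * (ε ^ (-p)) := by
    rw [← hN]; nlinarith [hN0, hC2]
end

section
/- Fix α ∈ [0, π/2), R > 0, and let R' := R/cos α. The set Π(R) := {z ∈ ℂ : Re(z - R') ≥ |z - R'| sin α} equals the complement of { e^{iθ} z : Re z < R, |θ| ≤ α }. -/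
set_option maxHeartbeats 800000 in
theorem sector_eq_complement (α : ℝ) (hα0 : 0 ≤ α) (hα : α < Real.pi / 2)
    (R : ℝ) (hR : 0 < R) (R' : ℝ) (hR' : R' = R / Real.cos α) :
    {z : ℂ | ‖z - R'‖ * Real.sin α ≤ (z - (R' : ℂ)).re} =
      {w : ℂ | ∃ θ : ℝ, ∃ z : ℂ, |θ| ≤ α ∧ z.re < R ∧ w = Complex.exp (θ * Complex.I) * z}ᶜ := by
  have hpi := Real.pi_pos
  have hcos : 0 < Real.cos α := Real.cos_pos_of_mem_Ioo ⟨by linarith, hα⟩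
  have hsin : 0 ≤ Real.sin α := Real.sin_nonneg_of_nonneg_of_le_pi hα0 (by linarith)
  have hRR : R' * Real.cos α = R := by rw [hR']; field_simp
  have hR'pos : 0 < R' := by rw [hR']; positivity
  have hs1 : Real.sin α ^ 2 + Real.cos α ^ 2 = 1 := Real.sin_sq_add_cos_sq α
  have hre : ∀ (θ : ℝ) (z : ℂ), (Complex.exp (θ * Complex.I) * z).re
      = Real.cos θ * z.re - Real.sin θ * z.im := by
    intro θ z
    simp [Complex.exp_mul_I, Complex.mul_re, Complex.cos_ofReal_re, Complex.sin_ofReal_re]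
  have hre' : ∀ (θ : ℝ) (z : ℂ), (Complex.exp (-(θ : ℂ) * Complex.I) * z).re
      = Real.cos θ * z.re + Real.sin θ * z.im := by
    intro θ z
    rw [show (-(θ : ℂ) * Complex.I) = ((-θ : ℝ) : ℂ) * Complex.I by push_cast; ring, hre]
    rw [Real.cos_neg, Real.sin_neg]; ring
  ext w
  set A : ℝ := ‖w - R'‖ with hA
  set a : ℝ := w.re - R' with ha
  set b : ℝ := w.im with hb
  have hsub_re : (w - (R' : ℂ)).re = a := by simp [ha]
  have hsub_im : (w - (R' : ℂ)).im = b := by simp [hb]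
  have habs : A ^ 2 = a ^ 2 + b ^ 2 := by
    rw [hA, Complex.sq_norm, Complex.normSq_apply, hsub_re, hsub_im]; ring
  have habs0 : 0 ≤ A := by rw [hA]; positivity
  have hwre : w.re = R' + a := by rw [ha]; ring
  clear_value A a b
  simp only [Set.mem_setOf_eq, Set.mem_compl_iff, not_exists]
  rw [hsub_re, ← hA]
  constructor
  · -- sector ⊆ complement
    intro h θ z
    rintro ⟨hθ, hz, hw⟩
    have ha0 : 0 ≤ a := le_trans (by positivity) h
    have hkey : |b| * Real.sin α ≤ a * Real.cos α := by
      have h2 : (a ^ 2 + b ^ 2) * Real.sin α ^ 2 ≤ a ^ 2 := by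
        nlinarith [mul_self_le_mul_self (by positivity : (0:ℝ) ≤ A * Real.sin α) h]
      have h3 : (|b| * Real.sin α) ^ 2 ≤ (a * Real.cos α) ^ 2 := by
        nlinarith [sq_abs b]
      exact (pow_le_pow_iff_left₀ (by positivity) (by positivity) two_ne_zero).mp h3
    have hzre : z.re = Real.cos θ * w.re + Real.sin θ * w.im := by
      have hz2 : z = Complex.exp (-(θ : ℂ) * Complex.I) * w := by
        rw [hw, ← mul_assoc, ← Complex.exp_add]
        norm_num
      rw [hz2, hre']
    obtain ⟨hθ1, hθ2⟩ := abs_le.mp hθ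
    have hcosθ : Real.cos α ≤ Real.cos θ := by
      rw [← Real.cos_abs θ]
      exact Real.cos_le_cos_of_nonneg_of_le_pi (abs_nonneg θ) (by linarith) hθ
    have hsinθ : |Real.sin θ| ≤ Real.sin α := by
      rw [abs_le]
      constructor
      · have := Real.sin_le_sin_of_le_of_le_pi_div_two (x := -α) (y := θ)
          (by linarith) (by linarith) hθ1
        rw [Real.sin_neg] at this; linarith
      · exact Real.sin_le_sin_of_le_of_le_pi_div_two (by linarith) (by linarith) hθ2
    have hfinal : R ≤ z.re := by
      rw [hzre, hwre, ← hb]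
      have h1 : Real.cos α * R' ≤ Real.cos θ * R' :=
        mul_le_mul_of_nonneg_right hcosθ hR'pos.le
      have h2 : Real.cos α * a ≤ Real.cos θ * a := mul_le_mul_of_nonneg_right hcosθ ha0
      have h3 : -(Real.sin α * |b|) ≤ Real.sin θ * b := by
        have h4 : |Real.sin θ * b| ≤ Real.sin α * |b| := by
          rw [abs_mul]
          exact mul_le_mul_of_nonneg_right hsinθ (abs_nonneg b)
        linarith [neg_abs_le (Real.sin θ * b)]
      nlinarith [hkey]
    linarith
  · -- complement ⊆ sector
    intro h
    set θ : ℝ := if 0 ≤ b then -α else α with hθdef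
    have hθabs : |θ| ≤ α := by
      rw [hθdef]; split <;> simp [abs_of_nonneg hα0]
    have hzw : w = Complex.exp (θ * Complex.I) * (Complex.exp (-(θ : ℂ) * Complex.I) * w) := by
      rw [← mul_assoc, ← Complex.exp_add]
      norm_num
    have hge : R ≤ (Complex.exp (-(θ : ℂ) * Complex.I) * w).re := by
      by_contra hlt
      exact h θ _ ⟨hθabs, lt_of_not_ge hlt, hzw⟩
    rw [hre'] at hge
    rw [← hb] at hge
    have hmain : R ≤ Real.cos α * w.re - Real.sin α * |b| := by
      rw [hθdef] at hge
      by_cases hb0 : 0 ≤ b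
      · rw [if_pos hb0, Real.cos_neg, Real.sin_neg] at hge
        rw [abs_of_nonneg hb0]
        linarith
      · rw [if_neg hb0] at hge
        rw [abs_of_neg (lt_of_not_ge hb0)]
        linarith
    have h5 : Real.cos α * a = Real.cos α * w.re - R' * Real.cos α := by rw [ha]; ring
    have hkey : Real.sin α * |b| ≤ Real.cos α * a := by linarith
    have ha0 : 0 ≤ a := by nlinarith [mul_nonneg hsin (abs_nonneg b)]
    have hsq : (A * Real.sin α) ^ 2 ≤ a ^ 2 := by
      have hc2 : (Real.sin α * |b|) ^ 2 ≤ (Real.cos α * a) ^ 2 := by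
        nlinarith [mul_nonneg hsin (abs_nonneg b), mul_nonneg hcos.le ha0]
      nlinarith [sq_abs b]
    exact (pow_le_pow_iff_left₀ (by positivity) ha0 two_ne_zero).mp hsq
end

section
/- Fix α ∈ [0, π/2), R > 0, R' := R/cos α, and let τ be complex with |τ| ≥ 1, τ ≠ 1, |arg(τ-1)| ≤ α. Let b := 1/(1-τ) and N(z) := |z-b| - |b|. Then the sector Π(R) := {z : Re(z - R') ≥ |z - R'| sin α} is contained in V(R) := {z : N(z) ≥ R}. -/
set_option maxHeartbeats 1000000


theorem sector_subset_V (α : ℝ) (hα0 : 0 ≤ α) (hα : α < Real.pi / 2)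
    (R : ℝ) (hR : 0 < R) (R' : ℝ) (hR' : R' = R / Real.cos α)
    (τ : ℂ) (hτ : 1 ≤ ‖τ‖) (hτ1 : τ ≠ 1)
    (harg : |Complex.arg (τ - 1)| ≤ α)
    (b : ℂ) (hb : b = 1 / (1 - τ))
    (N : ℂ → ℝ) (hN : ∀ z, N z = ‖z - b‖ - ‖b‖) :
    {z : ℂ | ‖(z - R' : ℂ)‖ * Real.sin α ≤ (z - (R' : ℂ)).re} ⊆ {z : ℂ | R ≤ N z} := by
  intro z hz
  simp only [Set.mem_setOf_eq] at hz ⊢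
  rw [hN]
  set c : ℂ := τ - 1 with hc_def
  have hc : c ≠ 0 := sub_ne_zero.mpr hτ1
  have hm : 0 < ‖c‖ := norm_pos_iff.mpr hc
  have hπ : 0 < Real.pi := Real.pi_pos
  have hcos : 0 < Real.cos α := Real.cos_pos_of_mem_Ioo ⟨by linarith, hα⟩
  have hsin : 0 ≤ Real.sin α := Real.sin_nonneg_of_nonneg_of_le_pi hα0 (by linarith)
  set m := ‖c‖ with hm_def
  have hA : c.re = m * Real.cos (Complex.arg c) := by
    rw [Complex.cos_arg hc]; field_simp; rfl
  have hB : c.im = m * Real.sin (Complex.arg c) := by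
    rw [Complex.sin_arg]; field_simp; rfl
  have hcosarg : Real.cos α ≤ Real.cos (Complex.arg c) := by
    rw [← Real.cos_abs (Complex.arg c)]
    exact Real.cos_le_cos_of_nonneg_of_le_pi (abs_nonneg _) (by linarith) harg
  have hmem1 : Complex.arg c ∈ Set.Icc (-(Real.pi/2)) (Real.pi/2) := by
    constructor
    · linarith [neg_le_of_abs_le harg]
    · linarith [le_of_abs_le harg]
  have hmemα : α ∈ Set.Icc (-(Real.pi/2)) (Real.pi/2) := ⟨by linarith, le_of_lt hα⟩
  have hmemnα : -α ∈ Set.Icc (-(Real.pi/2)) (Real.pi/2) := ⟨by linarith, by linarith⟩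
  have hsinarg : |Real.sin (Complex.arg c)| ≤ Real.sin α := by
    rw [abs_le]
    constructor
    · rw [← Real.sin_neg]
      exact Real.strictMonoOn_sin.monotoneOn hmemnα hmem1 (neg_le_of_abs_le harg)
    · exact Real.strictMonoOn_sin.monotoneOn hmem1 hmemα (le_of_abs_le harg)
  -- rewrite b
  have hb' : b = -c⁻¹ := by
    have h1 : (1 : ℂ) - τ = -c := by rw [hc_def]; ring
    rw [hb, h1, one_div, inv_neg]
  have habsb : ‖b‖ = m⁻¹ := by rw [hb', norm_neg, norm_inv]

  have hs : Complex.normSq c = m ^ 2 := by rw [hm_def, ← Complex.sq_norm]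
  have hs0 : (0:ℝ) < Complex.normSq c := by rw [hs]; positivity
  -- components of b
  have hbre : b.re = -(c.re / (m ^ 2)) := by
    rw [hb', Complex.neg_re, Complex.inv_re, hs]
  have hbim : b.im = c.im / (m ^ 2) := by
    rw [hb', Complex.neg_im, Complex.inv_im, hs]; ring
  -- key: abs (z - b) ≥ re ((z-b) * c) / m
  have hkey : ((z - b) * c).re ≤ ‖z - b‖ * m := by
    calc ((z - b) * c).re ≤ ‖(z - b) * c‖ := Complex.re_le_norm _
    _ = ‖z - b‖ * m := by rw [norm_mul]
  have hre : ((z - b) * c).re = z.re * c.re - z.im * c.im + 1 := by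
    rw [Complex.mul_re, Complex.sub_re, Complex.sub_im, hbre, hbim]
    have : c.re ^ 2 + c.im ^ 2 = m ^ 2 := by
      rw [← hs, Complex.normSq_apply]; ring
    field_simp
    linear_combination this
  -- sector facts
  set W := ‖z - (R' : ℂ)‖ with hW_def
  have hW0 : 0 ≤ W := norm_nonneg _
  have hre' : (z - (R' : ℂ)).re = z.re - R' := by simp
  have him' : (z - (R' : ℂ)).im = z.im := by simp
  have hzre : W * Real.sin α ≤ z.re - R' := by rw [← hre']; exact hz
  have hW2 : W ^ 2 = (z.re - R') ^ 2 + z.im ^ 2 := by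
    rw [hW_def, Complex.sq_norm, Complex.normSq_apply, hre', him']; ring
  have hzim : |z.im| ≤ W * Real.cos α := by
    have hWs : 0 ≤ W * Real.sin α := by positivity
    have hsq : (W * Real.sin α) ^ 2 ≤ (z.re - R') ^ 2 := by
      have := mul_self_le_mul_self hWs hzre
      nlinarith [this]
    have h1 : z.im ^ 2 ≤ (W * Real.cos α) ^ 2 := by
      have hsc : Real.sin α ^ 2 + Real.cos α ^ 2 = 1 := Real.sin_sq_add_cos_sq α
      nlinarith [hsq, hW2, sq_nonneg W]
    exact abs_le_of_sq_le_sq h1 (by positivity)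
  -- main bound: z.re * c.re - z.im * c.im ≥ R * m
  have hAge : m * Real.cos α ≤ c.re := by
    rw [hA]
    exact mul_le_mul_of_nonneg_left hcosarg (le_of_lt hm)
  have hBle : |c.im| ≤ m * Real.sin α := by
    rw [hB, abs_mul, abs_of_pos hm]
    exact mul_le_mul_of_nonneg_left hsinarg (le_of_lt hm)
  have hR'cos : R' * Real.cos α = R := by rw [hR']; field_simp
  have hmain : R * m ≤ z.re * c.re - z.im * c.im := by
    have h1 : (W * Real.sin α) * (m * Real.cos α) ≤ (z.re - R') * c.re := by
      apply mul_le_mul hzre hAge (by positivity)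
      have := mul_nonneg hW0 hsin
      linarith
    have h2 : -(z.im * c.im) ≥ -((W * Real.cos α) * (m * Real.sin α)) := by
      have : z.im * c.im ≤ |z.im| * |c.im| := by
        calc z.im * c.im ≤ |z.im * c.im| := le_abs_self _
        _ = |z.im| * |c.im| := abs_mul _ _
      have h3 : |z.im| * |c.im| ≤ (W * Real.cos α) * (m * Real.sin α) :=
        mul_le_mul hzim hBle (abs_nonneg _) (by positivity)
      linarith
    have h4 : R' * (m * Real.cos α) ≤ R' * c.re := by
      apply mul_le_mul_of_nonneg_left hAge
      have : 0 < R' := by rw [hR']; positivity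
      linarith
    nlinarith [h1, h2, h4]
  -- finish
  have hfinal : (R + m⁻¹) * m ≤ ‖z - b‖ * m := by
    calc (R + m⁻¹) * m = R * m + 1 := by field_simp
    _ ≤ z.re * c.re - z.im * c.im + 1 := by linarith
    _ = ((z - b) * c).re := hre.symm
    _ ≤ ‖z - b‖ * m := hkey
  have := le_of_mul_le_mul_right hfinal hm
  rw [habsb]
  linarith
end

section
/- Let S > 0 and let g be holomorphic on {|z| > S} with |g'(z)| ≤ K for all |z| ≥ 2S. Then for any z₁, z₂ with |z₁|, |z₂| ≥ 2S, |g(z₂) - g(z₁)| ≤ (π/2)·K·|z₂ - z₁|. -/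
open Complex Real Set

lemma normSq_arc_aux (c d : ℂ) (x y : ℝ) (hxy : x^2 + y^2 = 1) :
    Complex.normSq (c + d * ((x : ℂ) + (y : ℂ) * Complex.I)) =
      Complex.normSq c + Complex.normSq d
        + 2 * ((c * (starRingEnd ℂ) d).re * x + (c * (starRingEnd ℂ) d).im * y) := by
  simp only [Complex.normSq_apply, Complex.mul_re, Complex.mul_im, Complex.add_re,
    Complex.add_im, Complex.ofReal_re, Complex.ofReal_im, Complex.I_re, Complex.I_im,
    Complex.conj_re, Complex.conj_im]
  ring_nf
  linear_combination (d.re^2 + d.im^2) * hxy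

theorem increment_estimate (S K : ℝ) (hS : 0 < S) (g : ℂ → ℂ)
    (hg : DifferentiableOn ℂ g {z : ℂ | S < ‖z‖})
    (hbd : ∀ z : ℂ, 2 * S ≤ ‖z‖ → ‖deriv g z‖ ≤ K) :
    ∀ z₁ z₂ : ℂ, 2 * S ≤ ‖z₁‖ → 2 * S ≤ ‖z₂‖ →
      ‖g z₂ - g z₁‖ ≤ Real.pi / 2 * K * ‖z₂ - z₁‖ := by
  intro z₁ z₂ h1 h2
  have hK : 0 ≤ K := le_trans (norm_nonneg _) (hbd z₁ h1)
  set c : ℂ := (z₁ + z₂) / 2 with hc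
  set d : ℂ := (z₁ - z₂) / 2 with hd
  obtain ⟨e, he, hew⟩ : ∃ e : ℝ, (e = 1 ∨ e = -1) ∧ 0 ≤ e * (c * (starRingEnd ℂ) d).im := by
    rcases le_or_gt 0 ((c * (starRingEnd ℂ) d).im) with h | h
    · exact ⟨1, Or.inl rfl, by linarith⟩
    · exact ⟨-1, Or.inr rfl, by nlinarith⟩
  have habs_e : |e| = 1 := by rcases he with h | h <;> simp [h]
  have he2 : e^2 = 1 := by rcases he with h | h <;> simp [h]
  set γ : ℝ → ℂ := fun θ => c + d * Complex.exp ((e : ℂ) * (θ : ℂ) * Complex.I) with hγ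
  have hγ0 : γ 0 = z₁ := by
    simp only [hγ, Complex.ofReal_zero, mul_zero, zero_mul, Complex.exp_zero, mul_one]
    rw [hc, hd]; ring
  have hγπ : γ π = z₂ := by
    have hexp : Complex.exp ((e : ℂ) * (π : ℂ) * Complex.I) = -1 := by
      rcases he with h | h
      · simp [h, Complex.exp_pi_mul_I]
      · rw [h]; push_cast
        rw [show (-1 : ℂ) * (π : ℂ) * Complex.I = -((π : ℂ) * Complex.I) by ring,
          Complex.exp_neg, Complex.exp_pi_mul_I]
        norm_num
    simp only [hγ, hexp]
    rw [hc, hd]; ring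
  -- the arc stays in {2S ≤ |z|}
  have hmem : ∀ θ ∈ Icc (0:ℝ) π, 2 * S ≤ ‖γ θ‖ := by
    intro θ hθ
    have hsin : 0 ≤ Real.sin θ := Real.sin_nonneg_of_mem_Icc hθ
    have hcos : -1 ≤ Real.cos θ ∧ Real.cos θ ≤ 1 := ⟨Real.neg_one_le_cos θ, Real.cos_le_one θ⟩
    have hexp : Complex.exp ((e : ℂ) * (θ : ℂ) * Complex.I)
        = ((Real.cos θ : ℝ) : ℂ) + ((e * Real.sin θ : ℝ) : ℂ) * Complex.I := by
      rw [show (e : ℂ) * (θ : ℂ) * Complex.I = ((e * θ : ℝ) : ℂ) * Complex.I by push_cast; ring,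
        Complex.exp_mul_I]
      have hce : Real.cos (e * θ) = Real.cos θ := by
        rcases he with h | h <;> simp [h, Real.cos_neg]
      have hse : Real.sin (e * θ) = e * Real.sin θ := by
        rcases he with h | h <;> simp [h, Real.sin_neg]
      rw [← Complex.ofReal_cos, ← Complex.ofReal_sin, hce, hse]
    have hxy : (Real.cos θ)^2 + (e * Real.sin θ)^2 = 1 := by
      have := Real.sin_sq_add_cos_sq θ
      nlinarith [he2]
    have hnorm : Complex.normSq (γ θ) =
        Complex.normSq c + Complex.normSq d
          + 2 * ((c * (starRingEnd ℂ) d).re * Real.cos θ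
              + (c * (starRingEnd ℂ) d).im * (e * Real.sin θ)) := by
      rw [hγ]; simp only []
      rw [hexp]
      exact normSq_arc_aux c d (Real.cos θ) (e * Real.sin θ) hxy
    have h1' : Complex.normSq z₁ = Complex.normSq c + Complex.normSq d
        + 2 * (c * (starRingEnd ℂ) d).re := by
      rw [show z₁ = c + d by rw [hc, hd]; ring, Complex.normSq_add]
    have h2' : Complex.normSq z₂ = Complex.normSq c + Complex.normSq d
        - 2 * (c * (starRingEnd ℂ) d).re := by
      rw [show z₂ = c + -d by rw [hc, hd]; ring, Complex.normSq_add]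
      simp; ring
    have hge : (2 * S)^2 ≤ Complex.normSq (γ θ) := by
      rw [hnorm]
      have hs1 : (2 * S)^2 ≤ Complex.normSq z₁ := by
        have := Complex.sq_norm z₁; nlinarith [norm_nonneg z₁]
      have hs2 : (2 * S)^2 ≤ Complex.normSq z₂ := by
        have := Complex.sq_norm z₂; nlinarith [norm_nonneg z₂]
      rcases le_or_gt 0 ((c * (starRingEnd ℂ) d).re) with hw | hw
      · nlinarith [mul_nonneg hew hsin]
      · nlinarith [mul_nonneg hew hsin]
    have := Complex.sq_norm (γ θ)
    nlinarith [norm_nonneg (γ θ), hS]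
  -- derivative of γ
  have hγ' : ∀ θ : ℝ, HasDerivAt γ (d * Complex.exp ((e : ℂ) * (θ : ℂ) * Complex.I) * ((e : ℂ) * Complex.I)) θ := by
    intro θ
    have h0 : HasDerivAt (fun θ : ℝ => ((θ : ℂ))) 1 θ := Complex.ofRealCLM.hasDerivAt
    have h1 : HasDerivAt (fun θ : ℝ => (e : ℂ) * (θ : ℂ) * Complex.I) ((e : ℂ) * Complex.I) θ := by
      have := ((h0.const_mul ((e : ℂ))).mul_const Complex.I)
      simpa using this
    have h2 := h1.cexp
    have h3 := (h2.const_mul d).const_add c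
    simpa [hγ, mul_comm, mul_assoc] using h3
  have hopen : IsOpen {z : ℂ | S < ‖z‖} :=
    isOpen_lt continuous_const continuous_norm
  have hdiffg : ∀ θ ∈ Icc (0:ℝ) π, DifferentiableAt ℂ g (γ θ) := by
    intro θ hθ
    have hmem' : γ θ ∈ {z : ℂ | S < ‖z‖} := by
      have := hmem θ hθ; simp only [mem_setOf_eq]; linarith
    exact (hg (γ θ) hmem').differentiableAt (hopen.mem_nhds hmem')
  have key : ‖g (γ π) - g (γ 0)‖ ≤ (K * ‖d‖) * ‖π - 0‖ := by
    apply Convex.norm_image_sub_le_of_norm_hasDerivWithin_le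
      (f' := fun θ => deriv g (γ θ) * (d * Complex.exp ((e : ℂ) * (θ : ℂ) * Complex.I) * ((e : ℂ) * Complex.I)))
      (fun θ hθ => (((hdiffg θ hθ).hasDerivAt.comp θ (hγ' θ)).hasDerivWithinAt))
      ?_ (convex_Icc 0 π) ⟨le_refl 0, Real.pi_nonneg⟩ ⟨Real.pi_nonneg, le_refl π⟩
    intro θ hθ
    have hb := hbd (γ θ) (hmem θ hθ)
    have habs : ‖Complex.exp ((e : ℂ) * (θ : ℂ) * Complex.I)‖ = 1 := by
      rw [show (e : ℂ) * (θ : ℂ) * Complex.I = ((e * θ : ℝ) : ℂ) * Complex.I by push_cast; ring]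
      exact Complex.norm_exp_ofReal_mul_I _
    simp only [norm_mul, map_mul, habs, Complex.norm_I, Complex.norm_real, Real.norm_eq_abs,
      habs_e, mul_one, one_mul]
    exact mul_le_mul_of_nonneg_right hb (norm_nonneg d)
  rw [hγ0, hγπ] at key
  have hdabs : ‖d‖ = ‖z₂ - z₁‖ / 2 := by
    rw [hd, norm_div, Complex.norm_two, show z₁ - z₂ = -(z₂ - z₁) by ring, norm_neg]
  have hπ : ‖π - 0‖ = π := by
    rw [sub_zero, Real.norm_eq_abs, _root_.abs_of_nonneg Real.pi_nonneg]
  rw [hπ] at key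
  calc ‖g z₂ - g z₁‖ = ‖g z₂ - g z₁‖ := rfl
    _ ≤ K * ‖d‖ * π := key
    _ = Real.pi / 2 * K * ‖z₂ - z₁‖ := by rw [hdabs]; ring
end

section
/- Let S > R > 0, σ ∈ (0,1], M > 0, τ ∈ ℂ, and let f be holomorphic on {|z| > R} with |f(z) - (τz + 1)| ≤ M/|z|^σ for all |z| > R. Then for all z₁ ≠ z₂ with |z₁|, |z₂| ≥ 2S, |(f(z₂) - f(z₁))/(z₂ - z₁) - τ| ≤ (πM/2)/S^(1+σ). -/
open Complex Metric Set

/-- Cauchy derivative estimate for `g := f - (τ z + 1)` at points far from the origin. -/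
lemma deriv_bound_aux (S R σ M : ℝ) (τ : ℂ) (hRS : R < S) (hR : 0 < R)
    (hσ0 : 0 < σ) (hM : 0 < M) (f : ℂ → ℂ)
    (hf : DifferentiableOn ℂ f {z : ℂ | R < ‖z‖})
    (hbd : ∀ z : ℂ, R < ‖z‖ →
      ‖f z - (τ * z + 1)‖ ≤ M / ‖z‖ ^ σ)
    (w : ℂ) (hw : S * (1 + 2 / Real.pi) ≤ ‖w‖) :
    ‖deriv (fun z => f z - (τ * z + 1)) w‖ ≤ Real.pi * M / 2 / S ^ (1 + σ) := by
  have hS : 0 < S := hR.trans hRS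
  have hπ : (0 : ℝ) < Real.pi := Real.pi_pos
  set g : ℂ → ℂ := fun z => f z - (τ * z + 1) with hg
  have hwS : S < ‖w‖ := by
    have h2 : (0 : ℝ) < 2 / Real.pi := by positivity
    nlinarith
  set ρ : ℝ := ‖w‖ - S with hρdef
  have hρ : 0 < ρ := by simp [hρdef]; linarith
  have hsub : closedBall w ρ ⊆ {z : ℂ | R < ‖z‖} := by
    intro u hu
    simp only [mem_closedBall, Complex.dist_eq] at hu
    have h1 : ‖w‖ - ‖u‖ ≤ ‖u - w‖ := by
      have := norm_sub_norm_le w u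
      rw [norm_sub_rev] at this
      simpa using this
    simp only [mem_setOf_eq]
    linarith
  have hgd : DifferentiableOn ℂ g {z : ℂ | R < ‖z‖} := by
    apply hf.sub
    exact (((differentiable_id.const_mul τ).add_const 1)).differentiableOn
  have hdiff : DiffContOnCl ℂ g (ball w ρ) := by
    refine DifferentiableOn.diffContOnCl ?_
    refine hgd.mono ?_
    exact (closure_ball_subset_closedBall.trans hsub)
  have hCb : ∀ u ∈ sphere w ρ, ‖g u‖ ≤ M / S ^ σ := by
    intro u hu
    simp only [mem_sphere_iff_norm] at hu
    have habsu : S ≤ ‖u‖ := by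
      have h1 : ‖w‖ - ‖u‖ ≤ ‖u - w‖ := by
        have := norm_sub_norm_le w u
        rw [norm_sub_rev] at this
        simpa using this
      have h2 : ‖u - w‖ = ρ := by simpa using hu
      rw [h2] at h1
      linarith
    have hRu : R < ‖u‖ := lt_of_lt_of_le hRS habsu
    calc ‖g u‖ ≤ M / ‖u‖ ^ σ := hbd u hRu
      _ ≤ M / S ^ σ := by
          apply div_le_div_of_nonneg_left hM.le (Real.rpow_pos_of_pos hS _)
          exact Real.rpow_le_rpow hS.le habsu hσ0.le
  have key : ‖deriv g w‖ ≤ (M / S ^ σ) / ρ :=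
    Complex.norm_deriv_le_of_forall_mem_sphere_norm_le hρ hdiff hCb
  have hρ2 : 2 * S / Real.pi ≤ ρ := by
    simp only [hρdef]
    have : S * (2 / Real.pi) = 2 * S / Real.pi := by ring
    nlinarith
  calc ‖deriv g w‖ ≤ (M / S ^ σ) / ρ := key
    _ ≤ (M / S ^ σ) / (2 * S / Real.pi) := by
        apply div_le_div_of_nonneg_left (by positivity) (by positivity) hρ2
    _ = Real.pi * M / 2 / S ^ (1 + σ) := by
        rw [Real.rpow_add hS, Real.rpow_one]
        field_simp

set_option maxHeartbeats 1600000 in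
theorem key_lemma (S R σ M : ℝ) (τ : ℂ) (hRS : R < S) (hR : 0 < R)
    (hσ0 : 0 < σ) (hσ1 : σ ≤ 1) (hM : 0 < M) (f : ℂ → ℂ)
    (hf : DifferentiableOn ℂ f {z : ℂ | R < ‖z‖})
    (hbd : ∀ z : ℂ, R < ‖z‖ →
      ‖f z - (τ * z + 1)‖ ≤ M / ‖z‖ ^ σ) :
    ∀ z₁ z₂ : ℂ, z₁ ≠ z₂ → 2 * S ≤ ‖z₁‖ → 2 * S ≤ ‖z₂‖ →
      ‖(f z₂ - f z₁) / (z₂ - z₁) - τ‖ ≤ Real.pi * M / 2 / S ^ (1 + σ) := by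
  intro z₁ z₂ hne h1 h2
  have hS : 0 < S := hR.trans hRS
  have hπ : (0 : ℝ) < Real.pi := Real.pi_pos
  have hπ3 : (3 : ℝ) < Real.pi := Real.pi_gt_three
  set g : ℂ → ℂ := fun z => f z - (τ * z + 1) with hgdef
  have hzd : z₂ - z₁ ≠ 0 := sub_ne_zero.mpr (Ne.symm hne)
  obtain ⟨d, hddef⟩ : ∃ d : ℝ, d = ‖z₂ - z₁‖ := ⟨_, rfl⟩
  have hd : 0 < d := by
    rw [hddef]
    exact norm_pos_iff.mpr hzd
  have hrw : (f z₂ - f z₁) / (z₂ - z₁) - τ = (g z₂ - g z₁) / (z₂ - z₁) := by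
    field_simp [hgdef]
    ring
  rw [hrw, norm_div, ← hddef]
  have hSσ : (0:ℝ) < S ^ σ := Real.rpow_pos_of_pos hS _
  have hS1σ : S ^ (1 + σ) = S * S ^ σ := by
    rw [Real.rpow_add hS, Real.rpow_one]
  obtain ⟨A, hAdef⟩ : ∃ A : ℝ, A = (2:ℝ) ^ σ := ⟨_, rfl⟩
  have hA1 : 1 ≤ A := hAdef ▸ Real.one_le_rpow one_le_two hσ0.le
  have hA : 0 < A := lt_of_lt_of_le one_pos hA1
  have h2Sσ : (2 * S) ^ σ = A * S ^ σ := by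
    rw [hAdef]
    exact Real.mul_rpow (by norm_num) hS.le
  by_cases hcase : 4 * S / (Real.pi * A) ≤ d
  · -- far apart: use triangle inequality on the bound of g
    have hb : ∀ z : ℂ, 2 * S ≤ ‖z‖ → ‖g z‖ ≤ M / (A * S ^ σ) := by
      intro z hz
      have hRz : R < ‖z‖ := by linarith
      calc ‖g z‖ ≤ M / ‖z‖ ^ σ := hbd z hRz
        _ ≤ M / (2 * S) ^ σ := by
            apply div_le_div_of_nonneg_left hM.le (Real.rpow_pos_of_pos (by linarith) _)
            exact Real.rpow_le_rpow (by linarith) hz hσ0.le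
        _ = M / (A * S ^ σ) := by rw [h2Sσ]
    have hnum : ‖g z₂ - g z₁‖ ≤ 2 * M / (A * S ^ σ) := by
      calc ‖g z₂ - g z₁‖ ≤ ‖g z₂‖ + ‖g z₁‖ :=
            by simpa using norm_sub_le (g z₂) (g z₁)
        _ ≤ M / (A * S ^ σ) + M / (A * S ^ σ) := add_le_add (hb z₂ h2) (hb z₁ h1)
        _ = 2 * M / (A * S ^ σ) := by ring
    have h4 : 4 * S ≤ Real.pi * A * d := by
      rw [div_le_iff₀ (by positivity)] at hcase
      linarith
    rw [div_le_iff₀ hd, hS1σ]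
    refine hnum.trans ?_
    rw [div_le_iff₀ (by positivity : (0:ℝ) < A * S ^ σ)]
    have heq : Real.pi * M / 2 / (S * S ^ σ) * d * (A * S ^ σ) = Real.pi * M * d * A / (2 * S) := by
      field_simp
    rw [heq, le_div_iff₀ (by positivity)]
    have h5 := mul_le_mul_of_nonneg_left h4 hM.le
    nlinarith [h5]
  · -- close together: mean value inequality along the segment
    push_neg at hcase
    have hd4 : 3 * d ≤ 4 * S := by
      have h1' : d * (Real.pi * A) < 4 * S := by
        rw [lt_div_iff₀ (by positivity)] at hcase
        linarith
      have hπA : Real.pi ≤ Real.pi * A := le_mul_of_one_le_right hπ.le hA1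
      nlinarith [mul_le_mul_of_nonneg_right hπA hd.le, mul_lt_mul_of_pos_right hπ3 hd]
    have hU : IsOpen {z : ℂ | R < ‖z‖} :=
      isOpen_lt continuous_const continuous_norm
    have hgd : DifferentiableOn ℂ g {z : ℂ | R < ‖z‖} := by
      apply hf.sub
      exact (((differentiable_id.const_mul τ).add_const 1)).differentiableOn
    -- every point of the segment has modulus at least S * (1 + 2 / π)
    have hseg : ∀ w ∈ segment ℝ z₁ z₂, S * (1 + 2 / Real.pi) ≤ ‖w‖ := by
      rintro w ⟨a, b, ha, hb, hab, rfl⟩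
      have hb' : b = 1 - a := by linarith
      subst hb'
      have hnsq : Complex.normSq (a • z₁ + (1 - a) • z₂) =
          a * Complex.normSq z₁ + (1 - a) * Complex.normSq z₂
            - a * (1 - a) * Complex.normSq (z₂ - z₁) := by
        simp only [Complex.real_smul, Complex.normSq_apply, Complex.add_re, Complex.add_im,
          Complex.mul_re, Complex.mul_im, Complex.sub_re, Complex.sub_im,
          Complex.ofReal_re, Complex.ofReal_im]
        ring
      have hq1 : (2 * S) ^ 2 ≤ Complex.normSq z₁ := by
        rw [← Complex.sq_norm]
        exact pow_le_pow_left₀ (by positivity) h1 2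
      have hq2 : (2 * S) ^ 2 ≤ Complex.normSq z₂ := by
        rw [← Complex.sq_norm]
        exact pow_le_pow_left₀ (by positivity) h2 2
      have hqd : Complex.normSq (z₂ - z₁) = d ^ 2 := by
        rw [← Complex.sq_norm, hddef]
      have hab4 : a * (1 - a) ≤ 1 / 4 := by nlinarith [sq_nonneg (a - 1 / 2)]
      have hnsq_ge : 4 * S ^ 2 - d ^ 2 / 4 ≤ Complex.normSq (a • z₁ + (1 - a) • z₂) := by
        rw [hnsq, hqd]
        nlinarith [sq_nonneg d, mul_nonneg ha (by linarith : (0:ℝ) ≤ 1 - a)]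
      have hsq : (S * (1 + 2 / Real.pi)) ^ 2 ≤ Complex.normSq (a • z₁ + (1 - a) • z₂) := by
        have hstep : S * (1 + 2 / Real.pi) ≤ 5 / 3 * S := by
          have : 2 / Real.pi ≤ 2 / 3 := by
            apply div_le_div_of_nonneg_left (by norm_num) (by norm_num)
            linarith
          nlinarith
        have hstep2 : (5 / 3 * S) ^ 2 ≤ 4 * S ^ 2 - d ^ 2 / 4 := by nlinarith
        calc (S * (1 + 2 / Real.pi)) ^ 2 ≤ (5 / 3 * S) ^ 2 := by
              apply pow_le_pow_left₀ (by positivity) hstep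
          _ ≤ 4 * S ^ 2 - d ^ 2 / 4 := hstep2
          _ ≤ _ := hnsq_ge
      rw [Complex.norm_def]
      rw [show (S * (1 + 2 / Real.pi)) = Real.sqrt ((S * (1 + 2 / Real.pi)) ^ 2) by
        rw [Real.sqrt_sq (by positivity)]]
      exact Real.sqrt_le_sqrt hsq
    -- mean value inequality
    have hmem : ∀ w ∈ segment ℝ z₁ z₂, w ∈ {z : ℂ | R < ‖z‖} := by
      intro w hw
      have := hseg w hw
      have h2π : (0:ℝ) < 2 / Real.pi := by positivity
      simp only [Set.mem_setOf_eq]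
      nlinarith
    have hderiv : ∀ w ∈ segment ℝ z₁ z₂,
        HasFDerivWithinAt g
          (ContinuousLinearMap.smulRight (1 : ℂ →L[ℂ] ℂ) (deriv g w)) (segment ℝ z₁ z₂) w := by
      intro w hw
      have hda : DifferentiableAt ℂ g w :=
        hgd.differentiableAt (hU.mem_nhds (hmem w hw))
      exact hda.hasDerivAt.hasFDerivAt.hasFDerivWithinAt
    have hbound : ∀ w ∈ segment ℝ z₁ z₂,
        ‖ContinuousLinearMap.smulRight (1 : ℂ →L[ℂ] ℂ) (deriv g w)‖
          ≤ Real.pi * M / 2 / S ^ (1 + σ) := by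
      intro w hw
      rw [ContinuousLinearMap.norm_smulRight_apply, norm_one, one_mul]
      exact deriv_bound_aux S R σ M τ hRS hR hσ0 hM f hf hbd w (hseg w hw)
    have hmv := (convex_segment z₁ z₂).norm_image_sub_le_of_norm_hasFDerivWithin_le
      hderiv hbound (left_mem_segment ℝ z₁ z₂) (right_mem_segment ℝ z₁ z₂)
    rw [div_le_iff₀ hd]
    calc ‖g z₂ - g z₁‖ ≤ Real.pi * M / 2 / S ^ (1 + σ) * ‖z₂ - z₁‖ := hmv
      _ = Real.pi * M / 2 / S ^ (1 + σ) * d := by rw [hddef]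
end
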